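/- Consider continuous-time gradient flow dynamics on ℝⁿ: ż^(t) = −α̇^(t) ∇f(x^(t)), x^(t) = x^(0) + z^(t)/σ, z^(0) = 0. Then for all t > 0, f(x^(t)) − f(x*) ≤ [α^(0)(f(x^(0)) − f(x*)) + (σ/2)‖x* − x^(0)‖₂²] / α^(t). -/

import Mathlib

open scoped RealInnerProductSpace

/-- Convergence of continuous-time gradient flow (CT-GD) on `ℝⁿ`:
`f(x^(t)) − f(x*) ≤ (α^(0)(f(x^(0)) − f(x*)) + (σ/2)‖x* − x^(0)‖²) / α^(t)`. -/
theorem stmt6 {n : ℕ}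
    (f : EuclideanSpace ℝ (Fin n) → ℝ)
    (gf : EuclideanSpace ℝ (Fin n) → EuclideanSpace ℝ (Fin n))
    (hgrad : ∀ p, HasGradientAt f (gf p) p)
    (hgcont : Continuous gf)
    (hconv : ∀ p q, f q ≥ f p + ⟪gf p, q - p⟫)
    (xstar : EuclideanSpace ℝ (Fin n)) (hxstarmin : ∀ y, f xstar ≤ f y)
    (σ : ℝ) (hσ : 0 < σ)
    (α : ℝ → ℝ) (hαdiff : Differentiable ℝ α)
    (hαpos : ∀ t, 0 < α t) (hαinc : ∀ t, 0 < deriv α t)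
    (z x : ℝ → EuclideanSpace ℝ (Fin n))
    (hz : ∀ t, HasDerivAt z (-(deriv α t) • gf (x t)) t)
    (hx : ∀ t, x t = x 0 + σ⁻¹ • z t)
    (hz0 : z 0 = 0) :
    ∀ t > (0 : ℝ),
      f (x t) - f xstar ≤
        (α 0 * (f (x 0) - f xstar) + σ / 2 * ‖xstar - x 0‖ ^ 2) / α t := by
  have hxe : x = fun t => x 0 + σ⁻¹ • z t := funext hx
  have hx' : ∀ t, HasDerivAt x (-(deriv α t / σ) • gf (x t)) t := by
    intro t
    have : HasDerivAt (fun s => x 0 + σ⁻¹ • z s) (σ⁻¹ • (-(deriv α t) • gf (x t))) t :=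
      ((hz t).const_smul σ⁻¹).const_add (x 0)
    rw [← hxe] at this
    convert this using 1
    rw [smul_smul]
    congr 1
    field_simp
  -- derivative of f ∘ x
  have hfx : ∀ t, HasDerivAt (fun s => f (x s))
      (⟪gf (x t), -(deriv α t / σ) • gf (x t)⟫) t := by
    intro t
    have := ((hgrad (x t)).hasFDerivAt).comp_hasDerivAt t (hx' t)
    simp [InnerProductSpace.toDual_apply_apply] at this ⊢; exact this
  -- Lyapunov function
  set φ : ℝ → ℝ := fun t => α t * (f (x t) - f xstar) + σ / 2 * ‖xstar - x t‖ ^ 2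
    with hφ
  have hφd : ∀ t, HasDerivAt φ
      (deriv α t * (f (x t) - f xstar) + α t * ⟪gf (x t), -(deriv α t / σ) • gf (x t)⟫
        + σ / 2 * (⟪xstar - x t, -(-(deriv α t / σ) • gf (x t))⟫
            + ⟪-(-(deriv α t / σ) • gf (x t)), xstar - x t⟫)) t := by
    intro t
    have h1 : HasDerivAt (fun s => α s * (f (x s) - f xstar))
        (deriv α t * (f (x t) - f xstar)
          + α t * ⟪gf (x t), -(deriv α t / σ) • gf (x t)⟫) t :=
      ((hαdiff t).hasDerivAt).mul ((hfx t).sub_const (f xstar))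
    have h2 : HasDerivAt (fun s => xstar - x s) (-(-(deriv α t / σ) • gf (x t))) t :=
      (hx' t).const_sub xstar
    have h3 : HasDerivAt (fun s => ‖xstar - x s‖ ^ 2)
        (⟪xstar - x t, -(-(deriv α t / σ) • gf (x t))⟫
          + ⟪-(-(deriv α t / σ) • gf (x t)), xstar - x t⟫) t := by
      have := (h2.inner ℝ h2)
      -- this : derivative of fun s => ⟪xstar - x s, xstar - x s⟫
      have heq : (fun s => ‖xstar - x s‖ ^ 2) = fun s => ⟪xstar - x s, xstar - x s⟫ := by
        funext s; rw [real_inner_self_eq_norm_sq]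
      rw [heq]
      exact this
    exact h1.add (h3.const_mul (σ / 2))
  have hderiv_nonpos : ∀ t, deriv φ t ≤ 0 := by
    intro t
    rw [(hφd t).deriv]
    have hg := hconv (x t) xstar
    have hkey : f (x t) - f xstar + ⟪gf (x t), xstar - x t⟫ ≤ 0 := by linarith
    have e1 : ⟪gf (x t), -(deriv α t / σ) • gf (x t)⟫
        = -(deriv α t / σ) * ‖gf (x t)‖ ^ 2 := by
      rw [real_inner_smul_right, real_inner_self_eq_norm_sq]
    have e2 : ⟪xstar - x t, -(-(deriv α t / σ) • gf (x t))⟫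
        = (deriv α t / σ) * ⟪xstar - x t, gf (x t)⟫ := by
      rw [inner_neg_right, real_inner_smul_right]; ring
    have e3 : ⟪-(-(deriv α t / σ) • gf (x t)), xstar - x t⟫
        = (deriv α t / σ) * ⟪gf (x t), xstar - x t⟫ := by
      rw [inner_neg_left, real_inner_smul_left, real_inner_comm]; ring
    rw [e1, e2, e3, real_inner_comm (xstar - x t)]
    have h4 : (0:ℝ) ≤ α t * (deriv α t / σ) * ‖gf (x t)‖ ^ 2 := by
      have := (hαpos t).le
      have := (hαinc t).le
      positivity
    have h5 : deriv α t * (f (x t) - f xstar + ⟪gf (x t), xstar - x t⟫) ≤ 0 :=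
      mul_nonpos_of_nonneg_of_nonpos (hαinc t).le hkey
    have hσ' : σ ≠ 0 := hσ.ne'
    have heq : deriv α t * (f (x t) - f xstar)
        + α t * (-(deriv α t / σ) * ‖gf (x t)‖ ^ 2)
        + σ / 2 * (deriv α t / σ * ⟪xstar - x t, gf (x t)⟫
            + deriv α t / σ * ⟪xstar - x t, gf (x t)⟫)
        = deriv α t * (f (x t) - f xstar + ⟪xstar - x t, gf (x t)⟫)
          - α t * (deriv α t / σ) * ‖gf (x t)‖ ^ 2 := by
      field_simp
      ring
    rw [real_inner_comm (xstar - x t) (gf (x t))] at h5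
    rw [heq]
    linarith
  have hmono : Antitone φ :=
    antitone_of_deriv_nonpos (fun t => (hφd t).differentiableAt) hderiv_nonpos
  intro t ht
  have hφ0 : φ 0 = α 0 * (f (x 0) - f xstar) + σ / 2 * ‖xstar - x 0‖ ^ 2 := rfl
  have h1 : φ t ≤ φ 0 := hmono ht.le
  have h2 : α t * (f (x t) - f xstar) ≤ φ t := by
    have : 0 ≤ σ / 2 * ‖xstar - x t‖ ^ 2 := by positivity
    simp only [hφ]; linarith
  rw [le_div_iff₀ (hαpos t)]
  calc (f (x t) - f xstar) * α t = α t * (f (x t) - f xstar) := by ring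
    _ ≤ φ t := h2
    _ ≤ φ 0 := h1
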